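/- Let E(X,Y) be defined for X, Y ∈ ℂ³ by E(X,Y) = 4·Σ_{i=1}^{3}(|XᵢYᵢ|² − Re(Xᵢ²·conj(Yᵢ)²)) + (1/2)(|X₁Y₂|² + |X₂Y₁|²) + (1/2)(|X₂Y₃|² + |X₃Y₂|²) + (1/2)(|X₁Y₃|² + |X₃Y₁|²) + 4Re(X₁·conj(X₂)·conj(Y₁)·Y₂) − 5Re(X₁X₂·conj(Y₁)·conj(Y₂)) + 4Re(X₂·conj(X₃)·conj(Y₂)·Y₃) − 5Re(X₂X₃·conj(Y₂)·conj(Y₃)) − 5Re(X₁·conj(X₃)·conj(Y₁)·Y₃) + 4Re(X₁X₃·conj(Y₁)·conj(Y₃)). Then the vectors X = (1,1,1) and Y = (i,−i,i), which are linearly independent over ℝ in ℂ³, satisfy E(X,Y) = 0. -/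

import Mathlib

open Complex

/-- The Riemannian sectional curvature numerator `R_{xyyx}` of the Wallach threefold, in terms
of the `(1,0)`-parts `X, Y ∈ ℂ³` of `x = X + X̄`, `y = Y + Ȳ`. -/
noncomputable def wallachSectional (X Y : Fin 3 → ℂ) : ℝ :=
  4 * (∑ i : Fin 3, ((‖X i * Y i‖) ^ 2
        - (X i ^ 2 * (starRingEnd ℂ (Y i)) ^ 2).re))
    + (1 / 2) * ((‖X 0 * Y 1‖) ^ 2 + (‖X 1 * Y 0‖) ^ 2)
    + (1 / 2) * ((‖X 1 * Y 2‖) ^ 2 + (‖X 2 * Y 1‖) ^ 2)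
    + (1 / 2) * ((‖X 0 * Y 2‖) ^ 2 + (‖X 2 * Y 0‖) ^ 2)
    + 4 * (X 0 * (starRingEnd ℂ (X 1)) * (starRingEnd ℂ (Y 0)) * Y 1).re
    - 5 * (X 0 * X 1 * (starRingEnd ℂ (Y 0)) * (starRingEnd ℂ (Y 1))).re
    + 4 * (X 1 * (starRingEnd ℂ (X 2)) * (starRingEnd ℂ (Y 1)) * Y 2).re
    - 5 * (X 1 * X 2 * (starRingEnd ℂ (Y 1)) * (starRingEnd ℂ (Y 2))).re
    - 5 * (X 0 * (starRingEnd ℂ (X 2)) * (starRingEnd ℂ (Y 0)) * Y 2).re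
    + 4 * (X 0 * X 2 * (starRingEnd ℂ (Y 0)) * (starRingEnd ℂ (Y 2))).re

/-- The vectors `X = (1,1,1)` and `Y = (i,−i,i)` are linearly independent over `ℝ` and satisfy
`E(X,Y) = 0`: the Wallach metric's sectional curvature is nonnegative but not strictly
positive. -/
theorem wallach_sectional_not_positive :
    LinearIndependent ℝ
      ![(![1, 1, 1] : Fin 3 → ℂ), (![Complex.I, -Complex.I, Complex.I] : Fin 3 → ℂ)]
    ∧ wallachSectional ![1, 1, 1] ![Complex.I, -Complex.I, Complex.I] = 0 := by
  constructor
  · rw [LinearIndependent.pair_iff]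
    intro s t h
    have h0 := congrFun h 0
    simp [Complex.ext_iff] at h0
    exact ⟨h0.1, h0.2⟩
  · simp [wallachSectional, Fin.sum_univ_three, Complex.ext_iff]
    norm_num
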